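/- Representation of the continuation value via cash flows: Assume E[f_s(X_s)] < ∞ and E[|q_s(X_s)|] < ∞ for all s. Then for every t < T and every 0 ≤ w ≤ T−t−1, q_t(X_t) = E[ ϑ_{t+1:w}(f,q)(X_0,…,X_T) | σ(X_t) ] P-almost surely. In particular, for w = 0 this is the dynamic programming recursion q_t(X_t) = E[max(f_{t+1}(X_{t+1}), q_{t+1}(X_{t+1})) | σ(X_t)], and for w = T−t−1 it expresses q_t as the conditional expectation of the payoff obtained by applying the stopping rule induced by q itself. -/

import Mathlib

open MeasureTheory Filter
open scoped ENNReal

/-- The cash flow function `ϑ_{t:w}(f,h)` along a path `x`: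
`ϑ_{t:w}(f,h)(x) = Σ_{s=t}^{t+w} f_s(x_s)·1{f_s(x_s) ≥ h_s(x_s)}·Π_{r=t}^{s−1} 1{f_r(x_r) < h_r(x_r)}
  + h_{t+w}(x_{t+w})·Π_{r=t}^{t+w} 1{f_r(x_r) < h_r(x_r)}`. -/
noncomputable def cashflow {m : ℕ} (f h : ℕ → (Fin m → ℝ) → ℝ) (t w : ℕ)
    (x : ℕ → Fin m → ℝ) : ℝ :=
  (∑ s ∈ Finset.range (w + 1),
      f (t + s) (x (t + s)) * (if h (t + s) (x (t + s)) ≤ f (t + s) (x (t + s)) then 1 else 0) *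
        ∏ r ∈ Finset.range s, (if f (t + r) (x (t + r)) < h (t + r) (x (t + r)) then 1 else 0))
    + h (t + w) (x (t + w)) *
        ∏ r ∈ Finset.range (w + 1), (if f (t + r) (x (t + r)) < h (t + r) (x (t + r)) then 1 else 0)

/-- The σ-algebra `σ(X_0, …, X_t)` generated by the process up to time `t`. -/
def pastSigma {m : ℕ} {Ω : Type*} [MeasurableSpace Ω] (X : ℕ → Ω → Fin m → ℝ) (t : ℕ) :
    MeasurableSpace Ω :=
  ⨆ s : Fin (t + 1), MeasurableSpace.comap (X (s : ℕ)) inferInstance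

/-- `X_0, …, X_T` is a Markov chain: for every `t < T` and every bounded Borel function `g`
of the future coordinates `X_{t+1}, …, X_T`,
`E[g(X_{t+1},…,X_T) | σ(X_0,…,X_t)] = E[g(X_{t+1},…,X_T) | σ(X_t)]` a.s. -/
def IsMarkov {m : ℕ} {Ω : Type*} [MeasurableSpace Ω] (P : Measure Ω)
    (X : ℕ → Ω → Fin m → ℝ) (T : ℕ) : Prop :=
  ∀ t, t < T → ∀ g : (Fin (T - t) → Fin m → ℝ) → ℝ, Measurable g → (∃ C, ∀ y, |g y| ≤ C) →
    P[(fun ω => g fun j => X (t + 1 + (j : ℕ)) ω)|pastSigma X t]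
      =ᵐ[P] P[(fun ω => g fun j => X (t + 1 + (j : ℕ)) ω)|MeasurableSpace.comap (X t) inferInstance]

/-- `q = (q_0, …, q_T)` are the continuation values of the payoff `f`: the `q_t` are Borel,
`q_T = f_T`, and `q_t(X_t) = E[max(f_{t+1}(X_{t+1}), q_{t+1}(X_{t+1})) | σ(X_t)]` a.s. for
`t < T`. -/
def IsContinuation {m : ℕ} {Ω : Type*} [MeasurableSpace Ω] (P : Measure Ω)
    (X : ℕ → Ω → Fin m → ℝ) (T : ℕ) (f q : ℕ → (Fin m → ℝ) → ℝ) : Prop :=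
  (∀ t, t ≤ T → Measurable (q t)) ∧ q T = f T ∧
    ∀ t, t < T →
      (fun ω => q t (X t ω)) =ᵐ[P]
        P[(fun ω => max (f (t + 1) (X (t + 1) ω)) (q (t + 1) (X (t + 1) ω)))|
          MeasurableSpace.comap (X t) inferInstance]

section Aux

variable {m T : ℕ} {Ω : Type*} [mΩ : MeasurableSpace Ω] {P : Measure Ω} [IsProbabilityMeasure P]
  {X : ℕ → Ω → Fin m → ℝ}

lemma cashflow_zero (f h : ℕ → (Fin m → ℝ) → ℝ) (t : ℕ) (x : ℕ → Fin m → ℝ) :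
    cashflow f h t 0 x = max (f t (x t)) (h t (x t)) := by
  simp only [cashflow, zero_add, Finset.sum_range_one, Finset.prod_range_zero,
    Finset.prod_range_one, mul_one, Nat.add_zero]
  rcases le_or_gt (h t (x t)) (f t (x t)) with hc | hc
  · rw [if_pos hc, if_neg (not_lt.mpr hc), max_eq_left hc]; ring
  · rw [if_neg (not_le.mpr hc), if_pos hc, max_eq_right hc.le]; ring

lemma cashflow_succ (f h : ℕ → (Fin m → ℝ) → ℝ) (t w : ℕ) (x : ℕ → Fin m → ℝ) :
    cashflow f h t (w + 1) x = cashflow f h t w x +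
      (∏ r ∈ Finset.range (w + 1),
          (if f (t + r) (x (t + r)) < h (t + r) (x (t + r)) then 1 else 0)) *
        (max (f (t + (w + 1)) (x (t + (w + 1)))) (h (t + (w + 1)) (x (t + (w + 1))))
          - h (t + w) (x (t + w))) := by
  simp only [cashflow, Finset.sum_range_succ, Finset.prod_range_succ]
  rcases le_or_gt (h (t + (w + 1)) (x (t + (w + 1)))) (f (t + (w + 1)) (x (t + (w + 1)))) with hc | hc
  · rw [if_pos hc, if_neg (not_lt.mpr hc), max_eq_left hc]; ring
  · rw [if_neg (not_le.mpr hc), if_pos hc, max_eq_right hc.le]; ring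

lemma pastSigma_le (hX : ∀ t, Measurable (X t)) (t : ℕ) : pastSigma X t ≤ mΩ :=
  iSup_le fun _ => (hX _).comap_le

lemma comap_le_pastSigma {t s : ℕ} (hts : t ≤ s) :
    MeasurableSpace.comap (X t) inferInstance ≤ pastSigma X s :=
  le_iSup_of_le (⟨t, by omega⟩ : Fin (s + 1)) le_rfl

lemma measurable_comap_self (t : ℕ) :
    Measurable[MeasurableSpace.comap (X t) inferInstance] (X t) :=
  Measurable.of_comap_le le_rfl

lemma measurable_pastSigma {t s : ℕ} (hts : t ≤ s) :
    Measurable[pastSigma X s] (X t) :=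
  (measurable_comap_self t).mono (comap_le_pastSigma hts) le_rfl

/-- The Markov property extended to integrable (not necessarily bounded) functions of the
next coordinate, via truncation. -/
lemma markov_single (hX : ∀ t, Measurable (X t)) (hM : IsMarkov P X T)
    {s : ℕ} (hs : s < T) {g : (Fin m → ℝ) → ℝ} (hg : Measurable g)
    (hint : Integrable (fun ω => g (X (s + 1) ω)) P) :
    P[(fun ω => g (X (s + 1) ω))|pastSigma X s]
      =ᵐ[P] P[(fun ω => g (X (s + 1) ω))|MeasurableSpace.comap (X s) inferInstance] := by
  have hFle : pastSigma X s ≤ mΩ := pastSigma_le hX s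
  have hGle : MeasurableSpace.comap (X s) inferInstance ≤ pastSigma X s :=
    comap_le_pastSigma le_rfl
  set F : Ω → ℝ := fun ω => g (X (s + 1) ω) with hF
  set gn : ℕ → (Fin m → ℝ) → ℝ := fun n y => max (-(n : ℝ)) (min (n : ℝ) (g y)) with hgn
  set Fn : ℕ → Ω → ℝ := fun n ω => gn n (X (s + 1) ω) with hFn
  have hgnmeas : ∀ n, Measurable (gn n) := fun n =>
    measurable_const.max (measurable_const.min hg)
  have hgnbd : ∀ n y, |gn n y| ≤ (n : ℝ) := by
    intro n y
    have hn : (0 : ℝ) ≤ n := Nat.cast_nonneg n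
    rw [abs_le]
    exact ⟨le_max_left _ _, max_le (by linarith) (min_le_left _ _)⟩
  have habs : ∀ n y, |gn n y| ≤ |g y| := by
    intro n y
    have hn : (0 : ℝ) ≤ n := Nat.cast_nonneg n
    rw [abs_le]
    refine ⟨le_max_of_le_right (le_min (by linarith [abs_nonneg (g y)]) (neg_abs_le _)), ?_⟩
    exact max_le (by linarith [abs_nonneg (g y)]) ((min_le_right _ _).trans (le_abs_self _))
  have hpt : ∀ y, Tendsto (fun n => gn n y) atTop (nhds (g y)) := by
    intro y
    have hev : ∀ᶠ n : ℕ in atTop, gn n y = g y := by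
      filter_upwards [eventually_ge_atTop ⌈|g y|⌉₊] with n hn
      have h1 : |g y| ≤ (n : ℝ) := (Nat.le_ceil _).trans (by exact_mod_cast hn)
      rw [abs_le] at h1
      simp only [hgn]
      rw [min_eq_right h1.2, max_eq_right (by linarith [h1.1])]
    exact tendsto_const_nhds.congr' (hev.mono fun n h => h.symm)
  have key : ∀ n, P[Fn n|pastSigma X s]
      =ᵐ[P] P[Fn n|MeasurableSpace.comap (X s) inferInstance] := by
    intro n
    have h0 : (0 : ℕ) < T - s := by omega
    exact hM s hs (fun y => gn n (y ⟨0, h0⟩))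
      ((hgnmeas n).comp (measurable_pi_apply _)) ⟨n, fun y => hgnbd n _⟩
  have hFn_meas : ∀ n, AEStronglyMeasurable (Fn n) P := fun n =>
    ((hgnmeas n).comp (hX (s + 1))).aestronglyMeasurable
  have hFmeas : AEStronglyMeasurable F P := hint.1
  have hgn_int : ∀ n, Integrable (Fn n) P := fun n =>
    Integrable.mono' (integrable_const ((n : ℝ))) (hFn_meas n)
      (Filter.Eventually.of_forall fun ω => by
        simpa [Real.norm_eq_abs] using hgnbd n (X (s + 1) ω))
  have hL1 : Tendsto (fun n => ∫ ω, |Fn n ω - F ω| ∂P) atTop (nhds 0) := by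
    rw [show (0 : ℝ) = ∫ (_ : Ω), (0 : ℝ) ∂P by simp]
    refine tendsto_integral_of_dominated_convergence (fun ω => 2 * |F ω|)
      (fun n => ((hFn_meas n).sub hFmeas).norm) (hint.abs.const_mul 2)
      (fun n => Filter.Eventually.of_forall fun ω => ?_)
      (Filter.Eventually.of_forall fun ω => ?_)
    · rw [Real.norm_eq_abs, abs_abs]
      have h1 : |Fn n ω - F ω| ≤ |Fn n ω| + |F ω| := by
        rw [sub_eq_add_neg]
        exact (abs_add_le _ _).trans (by rw [abs_neg])
      have h2 : |Fn n ω| ≤ |F ω| := habs n _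
      show |Fn n ω - F ω| ≤ 2 * |F ω|
      linarith
    · have h := ((hpt (X (s + 1) ω)).sub
        (tendsto_const_nhds (x := g (X (s + 1) ω)) (f := atTop))).abs
      rw [sub_self, abs_zero] at h
      exact h
  refine (ae_eq_condExp_of_forall_setIntegral_eq hFle hint
    (fun A _ _ => integrable_condExp.integrableOn) (fun A hA _ => ?_)
    ((stronglyMeasurable_condExp.mono hGle).aestronglyMeasurable)).symm
  have hAmeas : MeasurableSet A := hFle A hA
  have heq : ∀ n, ∫ ω in A, Fn n ω ∂P
      = ∫ ω in A, (P[Fn n|MeasurableSpace.comap (X s) inferInstance]) ω ∂P := by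
    intro n
    rw [← setIntegral_condExp hFle (hgn_int n) hA]
    exact setIntegral_congr_ae hAmeas ((key n).mono fun ω h _ => h)
  have T1 : Tendsto (fun n => ∫ ω in A, Fn n ω ∂P) atTop (nhds (∫ ω in A, F ω ∂P)) := by
    refine tendsto_integral_of_dominated_convergence (fun ω => |F ω|)
      (fun n => (hFn_meas n).restrict) hint.abs.integrableOn
      (fun n => ae_restrict_of_ae (Filter.Eventually.of_forall fun ω => by
        simpa [Real.norm_eq_abs] using habs n (X (s + 1) ω)))
      (ae_restrict_of_ae (Filter.Eventually.of_forall fun ω => hpt (X (s + 1) ω)))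
  have hdiff : ∀ n, |(∫ ω in A, (P[Fn n|MeasurableSpace.comap (X s) inferInstance]) ω ∂P)
      - ∫ ω in A, (P[F|MeasurableSpace.comap (X s) inferInstance]) ω ∂P|
      ≤ ∫ ω, |Fn n ω - F ω| ∂P := by
    intro n
    rw [← integral_sub integrable_condExp.integrableOn integrable_condExp.integrableOn]
    have hce : (fun ω => (P[Fn n|MeasurableSpace.comap (X s) inferInstance]) ω
        - (P[F|MeasurableSpace.comap (X s) inferInstance]) ω)
        =ᵐ[P] P[Fn n - F|MeasurableSpace.comap (X s) inferInstance] :=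
      (condExp_sub (hgn_int n) hint _).symm
    rw [setIntegral_congr_ae hAmeas (hce.mono fun ω h _ => h)]
    calc |∫ ω in A, (P[Fn n - F|MeasurableSpace.comap (X s) inferInstance]) ω ∂P|
        ≤ ∫ ω in A, |(P[Fn n - F|MeasurableSpace.comap (X s) inferInstance]) ω| ∂P := by
          simpa [Real.norm_eq_abs] using
            norm_integral_le_integral_norm
              (fun ω => (P[Fn n - F|MeasurableSpace.comap (X s) inferInstance]) ω)
              (μ := P.restrict A)
      _ ≤ ∫ ω, |(P[Fn n - F|MeasurableSpace.comap (X s) inferInstance]) ω| ∂P :=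
          setIntegral_le_integral integrable_condExp.abs
            (Filter.Eventually.of_forall fun ω => abs_nonneg _)
      _ ≤ ∫ ω, |(Fn n - F) ω| ∂P := integral_abs_condExp_le _
      _ = ∫ ω, |Fn n ω - F ω| ∂P := rfl
  have T2 : Tendsto (fun n => ∫ ω in A, (P[Fn n|MeasurableSpace.comap (X s) inferInstance]) ω ∂P)
      atTop (nhds (∫ ω in A, (P[F|MeasurableSpace.comap (X s) inferInstance]) ω ∂P)) := by
    have h0 : Tendsto (fun n =>
        (∫ ω in A, (P[Fn n|MeasurableSpace.comap (X s) inferInstance]) ω ∂P)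
        - ∫ ω in A, (P[F|MeasurableSpace.comap (X s) inferInstance]) ω ∂P) atTop (nhds 0) :=
      squeeze_zero_norm (fun n => by
        simpa [Real.norm_eq_abs] using hdiff n) hL1
    have := h0.add (tendsto_const_nhds
      (x := ∫ ω in A, (P[F|MeasurableSpace.comap (X s) inferInstance]) ω ∂P) (f := atTop))
    simpa using this
  have T1' := T1
  simp_rw [heq] at T1'
  exact tendsto_nhds_unique T2 T1'

/-- The dynamic programming recursion holds conditionally on the whole past. -/
lemma condexp_max_pastSigma (hX : ∀ t, Measurable (X t)) (hM : IsMarkov P X T)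
    {f q : ℕ → (Fin m → ℝ) → ℝ}
    (hfmeas : ∀ t, t ≤ T → Measurable (f t))
    (hfint : ∀ t, t ≤ T → Integrable (fun ω => f t (X t ω)) P)
    (hqmeas : ∀ t, t ≤ T → Measurable (q t))
    (hqint : ∀ t, t ≤ T → Integrable (fun ω => q t (X t ω)) P)
    (hqrec : ∀ t, t < T →
      (fun ω => q t (X t ω)) =ᵐ[P]
        P[(fun ω => max (f (t + 1) (X (t + 1) ω)) (q (t + 1) (X (t + 1) ω)))|
          MeasurableSpace.comap (X t) inferInstance])
    {s : ℕ} (hs : s < T) :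
    P[(fun ω => max (f (s + 1) (X (s + 1) ω)) (q (s + 1) (X (s + 1) ω)))|pastSigma X s]
      =ᵐ[P] (fun ω => q s (X s ω)) := by
  have hintmax : Integrable (fun ω => max (f (s + 1) (X (s + 1) ω)) (q (s + 1) (X (s + 1) ω))) P :=
    (hfint (s + 1) (by omega)).sup (hqint (s + 1) (by omega))
  exact (markov_single hX hM hs ((hfmeas (s + 1) (by omega)).max (hqmeas (s + 1) (by omega)))
    hintmax).trans (hqrec s hs).symm

lemma cashflow_integrable (hX : ∀ t, Measurable (X t))
    {f q : ℕ → (Fin m → ℝ) → ℝ}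
    (hfmeas : ∀ t, t ≤ T → Measurable (f t))
    (hfint : ∀ t, t ≤ T → Integrable (fun ω => f t (X t ω)) P)
    (hqmeas : ∀ t, t ≤ T → Measurable (q t))
    (hqint : ∀ t, t ≤ T → Integrable (fun ω => q t (X t ω)) P) :
    ∀ (t w : ℕ), t + w ≤ T → Integrable (fun ω => cashflow f q t w (fun u => X u ω)) P := by
  intro t w
  induction w with
  | zero =>
    intro h
    have he : (fun ω => cashflow f q t 0 fun u => X u ω)
        = fun ω => max (f t (X t ω)) (q t (X t ω)) :=
      funext fun ω => cashflow_zero f q t _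
    rw [he]
    exact (hfint t (by omega)).sup (hqint t (by omega))
  | succ w ih =>
    intro h
    have he : (fun ω => cashflow f q t (w + 1) fun u => X u ω)
        = fun ω => cashflow f q t w (fun u => X u ω) +
            (∏ r ∈ Finset.range (w + 1),
              (if f (t + r) (X (t + r) ω) < q (t + r) (X (t + r) ω) then 1 else 0)) *
            (max (f (t + (w + 1)) (X (t + (w + 1)) ω)) (q (t + (w + 1)) (X (t + (w + 1)) ω))
              - q (t + w) (X (t + w) ω)) :=
      funext fun ω => cashflow_succ f q t w _
    rw [he]
    refine (ih (by omega)).add ?_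
    have hZmeas : Measurable (fun ω => ∏ r ∈ Finset.range (w + 1),
        (if f (t + r) (X (t + r) ω) < q (t + r) (X (t + r) ω) then (1 : ℝ) else 0)) := by
      refine Finset.measurable_prod _ fun r hr => ?_
      have hrT : t + r ≤ T := by
        simp only [Finset.mem_range] at hr; omega
      exact Measurable.ite
        (measurableSet_lt ((hfmeas _ hrT).comp (hX _)) ((hqmeas _ hrT).comp (hX _)))
        measurable_const measurable_const
    have hMQint : Integrable (fun ω =>
        max (f (t + (w + 1)) (X (t + (w + 1)) ω)) (q (t + (w + 1)) (X (t + (w + 1)) ω))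
          - q (t + w) (X (t + w) ω)) P :=
      ((hfint _ (by omega)).sup (hqint _ (by omega))).sub (hqint _ (by omega))
    refine hMQint.bdd_mul hZmeas.aestronglyMeasurable (c := 1) (Filter.Eventually.of_forall fun ω => ?_)
    rw [Real.norm_eq_abs, abs_of_nonneg (Finset.prod_nonneg fun r _ => by split <;> norm_num)]
    exact Finset.prod_le_one (fun r _ => by split <;> norm_num)
      (fun r _ => by split <;> norm_num)

end Aux

/-- **Representation of the continuation value via cash flows** (equation (3.19)).
For every `t < T` and `0 ≤ w ≤ T−t−1`,
`q_t(X_t) = E[ϑ_{t+1:w}(f,q)(X_0,…,X_T) | σ(X_t)]` `P`-a.s. -/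
theorem continuation_value_cashflow_representation
    {m T : ℕ} (hT : 1 ≤ T)
    {Ω : Type*} [MeasurableSpace Ω] (P : Measure Ω) [IsProbabilityMeasure P]
    (X : ℕ → Ω → Fin m → ℝ) (hX : ∀ t, Measurable (X t)) (hMarkov : IsMarkov P X T)
    (f : ℕ → (Fin m → ℝ) → ℝ) (hfmeas : ∀ t, t ≤ T → Measurable (f t))
    (hfnn : ∀ t x, 0 ≤ f t x)
    (hfint : ∀ t, t ≤ T → Integrable (fun ω => f t (X t ω)) P)
    (q : ℕ → (Fin m → ℝ) → ℝ) (hq : IsContinuation P X T f q)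
    (hqint : ∀ t, t ≤ T → Integrable (fun ω => q t (X t ω)) P) :
    ∀ t, t < T → ∀ w, t + w + 1 ≤ T →
      (fun ω => q t (X t ω)) =ᵐ[P]
        P[(fun ω => cashflow f q (t + 1) w (fun s => X s ω))|
          MeasurableSpace.comap (X t) inferInstance] := by
  obtain ⟨hqmeas, hqT, hqrec⟩ := hq
  intro t ht w
  induction w with
  | zero =>
    intro hw
    have h1 : (fun ω => cashflow f q (t + 1) 0 fun s => X s ω)
        = fun ω => max (f (t + 1) (X (t + 1) ω)) (q (t + 1) (X (t + 1) ω)) :=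
      funext fun ω => cashflow_zero f q (t + 1) _
    rw [h1]
    exact hqrec t ht
  | succ w ih =>
    intro hw
    have hw' : t + w + 1 ≤ T := by omega
    have ihh := ih hw'
    have hsT : t + 1 + w < T := by omega
    set s := t + 1 + w with hsdef
    set Z : Ω → ℝ := fun ω => ∏ r ∈ Finset.range (w + 1),
      (if f (t + 1 + r) (X (t + 1 + r) ω) < q (t + 1 + r) (X (t + 1 + r) ω) then 1 else 0)
      with hZ
    set M : Ω → ℝ := fun ω => max (f (s + 1) (X (s + 1) ω)) (q (s + 1) (X (s + 1) ω)) with hM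
    set Q : Ω → ℝ := fun ω => q s (X s ω) with hQ
    have hFle : pastSigma X s ≤ _ := pastSigma_le hX s
    have hsplit : (fun ω => cashflow f q (t + 1) (w + 1) fun u => X u ω)
        = (fun ω => cashflow f q (t + 1) w fun u => X u ω) + Z * (M - Q) := by
      funext ω
      simp only [Pi.add_apply, Pi.mul_apply, Pi.sub_apply, hZ, hM, hQ]
      rw [cashflow_succ]
      rfl
    -- integrability
    have hMint : Integrable M P := by
      have := (hfint (s + 1) (by omega)).sup (hqint (s + 1) (by omega))
      exact this
    have hQint : Integrable Q P := hqint s (by omega)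
    have hMQint : Integrable (M - Q) P := hMint.sub hQint
    have hZbd : ∀ ω, ‖Z ω‖ ≤ 1 := by
      intro ω
      rw [hZ, Real.norm_eq_abs,
        abs_of_nonneg (Finset.prod_nonneg fun r _ => by split <;> norm_num)]
      exact Finset.prod_le_one (fun r _ => by split <;> norm_num)
        (fun r _ => by split <;> norm_num)
    have hZmF : Measurable[pastSigma X s] Z := by
      rw [hZ]
      refine Finset.measurable_prod _ fun r hr => ?_
      have hrs : t + 1 + r ≤ s := by
        simp only [Finset.mem_range] at hr; omega
      have hXr : Measurable[pastSigma X s] (X (t + 1 + r)) := measurable_pastSigma hrs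
      exact Measurable.ite
        (measurableSet_lt ((hfmeas _ (by omega)).comp hXr) ((hqmeas _ (by omega)).comp hXr))
        measurable_const measurable_const
    have hZm : Measurable Z := hZmF.mono hFle le_rfl
    have hDint : Integrable (Z * (M - Q)) P :=
      hMQint.bdd_mul hZm.aestronglyMeasurable (c := 1) (Filter.Eventually.of_forall hZbd)
    have hcwint : Integrable (fun ω => cashflow f q (t + 1) w fun u => X u ω) P :=
      cashflow_integrable hX hfmeas hfint hqmeas hqint (t + 1) w (by omega)
    -- the correction has zero conditional expectation
    have h3 : P[M|pastSigma X s] =ᵐ[P] Q :=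
      condexp_max_pastSigma hX hMarkov hfmeas hfint hqmeas hqint hqrec hsT
    have hQsm : StronglyMeasurable[pastSigma X s] Q :=
      ((hqmeas s (by omega)).comp (measurable_pastSigma le_rfl)).stronglyMeasurable
    have h4 : P[Q|pastSigma X s] = Q :=
      condExp_of_stronglyMeasurable hFle hQsm hQint
    have h2 : P[M - Q|pastSigma X s] =ᵐ[P] P[M|pastSigma X s] - P[Q|pastSigma X s] :=
      condExp_sub hMint hQint _
    have hDpast : P[Z * (M - Q)|pastSigma X s] =ᵐ[P] Z * P[M - Q|pastSigma X s] :=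
      condExp_mul_of_stronglyMeasurable_left hZmF.stronglyMeasurable hDint hMQint
    have h5 : P[Z * (M - Q)|pastSigma X s] =ᵐ[P] 0 := by
      filter_upwards [hDpast, h2, h3] with ω e1 e2 e3
      have e4 : (P[Q|pastSigma X s]) ω = Q ω := by rw [h4]
      simp only [Pi.zero_apply]
      rw [e1, Pi.mul_apply, e2, Pi.sub_apply, e3, e4, sub_self, mul_zero]
    have hle1 : MeasurableSpace.comap (X t) inferInstance ≤ pastSigma X s :=
      comap_le_pastSigma (by omega)
    have hDzero : P[Z * (M - Q)|MeasurableSpace.comap (X t) inferInstance] =ᵐ[P] 0 := by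
      refine ((condExp_condExp_of_le hle1 hFle).symm.trans ?_)
      refine (condExp_congr_ae h5).trans ?_
      rw [condExp_zero]
    have hfinal : P[(fun ω => cashflow f q (t + 1) (w + 1) fun u => X u ω)|
        MeasurableSpace.comap (X t) inferInstance]
        =ᵐ[P] P[(fun ω => cashflow f q (t + 1) w fun u => X u ω)|
          MeasurableSpace.comap (X t) inferInstance] := by
      rw [hsplit]
      refine (condExp_add hcwint hDint _).trans ?_
      filter_upwards [hDzero] with ω h
      simp only [Pi.add_apply, h, Pi.zero_apply, add_zero]
    exact ihh.trans hfinal.symm
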